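/- Fix a constant α with 0 < α ≤ 1. Then lim_{n→∞} (1 + 2^{(αn-2)/(αn)} - 2^{(αn-1)/(αn)})^n = 4^{-1/α}. -/

import Mathlib

open Filter

noncomputable def phi7 (x : ℝ) : ℝ := 1 + (2:ℝ) ^ (1 - 2*x) - (2:ℝ) ^ (1 - x)

lemma phi7_eq (x : ℝ) :
    phi7 x = 1 + (2:ℝ)^(1-x) * (2:ℝ)^(1-x) / 2 - (2:ℝ)^(1-x) := by
  have h : (2:ℝ)^(1-x) * (2:ℝ)^(1-x) = (2:ℝ)^(1-2*x) * 2 := by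
    rw [← Real.rpow_add two_pos, show (1-x)+(1-x) = (1-2*x)+1 by ring,
      Real.rpow_add two_pos, Real.rpow_one]
  rw [phi7, h]; ring

lemma phi7_pos (x : ℝ) : 0 < phi7 x := by
  rw [phi7_eq]
  have hy : 0 < (2:ℝ)^(1-x) := Real.rpow_pos_of_pos two_pos _
  nlinarith [sq_nonneg ((2:ℝ)^(1-x) - 1)]

lemma phi7_zero : phi7 0 = 1 := by
  simp [phi7]

lemma phi7_deriv : HasDerivAt phi7 (-2 * Real.log 2) 0 := by
  have h1 : HasDerivAt (fun x : ℝ => 1 - 2*x) (-2) 0 := by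
    simpa using ((hasDerivAt_id (0:ℝ)).const_mul 2).const_sub 1
  have h2 : HasDerivAt (fun x : ℝ => 1 - x) (-1) 0 := by
    simpa using (hasDerivAt_id (0:ℝ)).const_sub 1
  have H1 : HasDerivAt (fun x : ℝ => (2:ℝ) ^ (1 - 2*x))
      (((2:ℝ)^(1-2*(0:ℝ)) * Real.log 2) * (-2)) 0 :=
    ((Real.hasStrictDerivAt_const_rpow two_pos (1-2*(0:ℝ))).hasDerivAt).comp 0 h1
  have H2 : HasDerivAt (fun x : ℝ => (2:ℝ) ^ (1 - x))
      (((2:ℝ)^(1-(0:ℝ)) * Real.log 2) * (-1)) 0 :=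
    ((Real.hasStrictDerivAt_const_rpow two_pos (1-(0:ℝ))).hasDerivAt).comp 0 h2
  have := (H1.const_add 1).sub H2
  refine HasDerivAt.congr_deriv (f := phi7) this ?_
  norm_num [Real.rpow_one]
  ring

lemma logphi7_deriv : HasDerivAt (fun x => Real.log (phi7 x)) (-2 * Real.log 2) 0 := by
  have h := phi7_deriv.log (ne_of_gt (phi7_pos 0))
  simpa [phi7_zero] using h

theorem stmt_7 (α : ℝ) (hα0 : 0 < α) (hα1 : α ≤ 1) :
    Tendsto
      (fun n : ℕ =>
        (1 + (2 : ℝ) ^ ((α * n - 2) / (α * n)) - (2 : ℝ) ^ ((α * n - 1) / (α * n))) ^ n)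
      atTop (nhds ((4 : ℝ) ^ (-1 / α))) := by
  set L := Real.log 2 with hL
  set f : ℝ → ℝ := fun x => Real.log (phi7 x) with hf
  set u : ℕ → ℝ := fun n => (α * n)⁻¹ with hu
  -- slope tendsto
  have hslope : Tendsto (slope f 0) (nhdsWithin 0 {(0:ℝ)}ᶜ) (nhds (-2 * L)) :=
    hasDerivAt_iff_tendsto_slope.mp logphi7_deriv
  -- u tends to 0 within ≠ 0
  have hαn : Tendsto (fun n : ℕ => α * n) atTop atTop :=
    (tendsto_natCast_atTop_atTop).const_mul_atTop hα0
  have hu0 : Tendsto u atTop (nhds 0) := hαn.inv_tendsto_atTop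
  have hune : ∀ᶠ n : ℕ in atTop, u n ∈ ({(0:ℝ)}ᶜ : Set ℝ) := by
    filter_upwards [eventually_ge_atTop 1] with n hn
    have : (0:ℝ) < α * n := by
      have : (1:ℝ) ≤ (n:ℝ) := by exact_mod_cast hn
      positivity
    simp only [Set.mem_compl_iff, Set.mem_singleton_iff, hu]
    exact ne_of_gt (inv_pos.mpr this)
  have huw : Tendsto u atTop (nhdsWithin 0 {(0:ℝ)}ᶜ) :=
    tendsto_nhdsWithin_iff.mpr ⟨hu0, hune⟩
  have hcomp : Tendsto (fun n => slope f 0 (u n)) atTop (nhds (-2 * L)) :=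
    hslope.comp huw
  -- identify n * log(base n) with (1/α) * slope f 0 (u n) eventually
  have hbase : ∀ᶠ n : ℕ in atTop,
      (1 + (2 : ℝ) ^ ((α * n - 2) / (α * n)) - (2 : ℝ) ^ ((α * n - 1) / (α * n)))
        = phi7 (u n) := by
    filter_upwards [eventually_ge_atTop 1] with n hn
    have hn' : (0:ℝ) < α * n := by
      have : (1:ℝ) ≤ (n:ℝ) := by exact_mod_cast hn
      positivity
    have e1 : (α * n - 2) / (α * n) = 1 - 2 * u n := by
      simp only [hu]; field_simp
    have e2 : (α * n - 1) / (α * n) = 1 - u n := by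
      simp only [hu]; field_simp
    rw [e1, e2, phi7]
  have hmul : Tendsto (fun n : ℕ => (n:ℝ) * Real.log (phi7 (u n))) atTop
      (nhds (α⁻¹ * (-2 * L))) := by
    have := hcomp.const_mul α⁻¹
    apply this.congr'
    filter_upwards [eventually_ge_atTop 1] with n hn
    have hn1 : (1:ℝ) ≤ (n:ℝ) := by exact_mod_cast hn
    have hn' : (0:ℝ) < α * n := by positivity
    have hune : u n ≠ 0 := ne_of_gt (inv_pos.mpr hn')
    have hf0 : f 0 = 0 := by simp [hf, phi7_zero]
    rw [slope_def_field, hf0]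
    simp only [hf, hu]; field_simp
    ring
  -- exponentiate
  have hexp : Tendsto (fun n : ℕ => Real.exp ((n:ℝ) * Real.log (phi7 (u n)))) atTop
      (nhds (Real.exp (α⁻¹ * (-2 * L)))) := (Real.continuous_exp.tendsto _).comp hmul
  have hfinal : Real.exp (α⁻¹ * (-2 * L)) = (4:ℝ) ^ (-1 / α) := by
    rw [Real.rpow_def_of_pos (by norm_num : (0:ℝ) < 4)]
    congr 1
    have : Real.log 4 = 2 * L := by
      rw [show (4:ℝ) = 2^(2:ℕ) by norm_num, Real.log_pow]
      push_cast; ring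
    rw [this]; ring
  rw [← hfinal]
  apply hexp.congr'
  filter_upwards [hbase, eventually_ge_atTop 1] with n hb hn
  rw [Real.exp_nat_mul, Real.exp_log (phi7_pos _), ← hb]
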